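/- For a rational polyhedral cone σ in N_ℝ, the set S_σ = σ∨ ∩ M of lattice points of the dual cone is a finitely generated affine semigroup (Gordan's Lemma). -/

import Mathlib

open Matrix

/-- The point has integer coordinates, i.e. lies in the lattice `ℤⁿ ⊆ ℝⁿ`. -/
def IsLatticePt {n : ℕ} (x : Fin n → ℝ) : Prop := ∀ i, ∃ z : ℤ, x i = (z : ℝ)

/-- The convex polyhedral cone generated by a set: all finite nonnegative combinations. -/
def coneGen {V : Type*} [AddCommMonoid V] [Module ℝ V] (S : Set V) : Set V :=
  {x | ∃ (t : Finset V) (c : V → ℝ), ↑t ⊆ S ∧ (∀ v ∈ t, 0 ≤ c v) ∧ x = ∑ v ∈ t, c v • v}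

/-- The dual cone with respect to the standard pairing. -/
def dualCone {n : ℕ} (σ : Set (Fin n → ℝ)) : Set (Fin n → ℝ) :=
  {m | ∀ u ∈ σ, 0 ≤ m ⬝ᵥ u}

/- ### Auxiliary material -/

lemma Gordan.mem_dual_iff {n : ℕ} (S' : Finset (Fin n → ℝ)) (m : Fin n → ℝ) :
    m ∈ dualCone (coneGen (S' : Set (Fin n → ℝ))) ↔ ∀ s ∈ S', 0 ≤ m ⬝ᵥ s := by
  constructor
  · intro h s hs
    refine h s ⟨{s}, fun _ => 1, by simpa using hs, by simp, by simp⟩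
  · rintro h u ⟨t, c, hts, hc, rfl⟩
    have : m ⬝ᵥ ∑ v ∈ t, c v • v = ∑ v ∈ t, c v * (m ⬝ᵥ v) := by
      simp only [dotProduct, Finset.sum_apply, Pi.smul_apply, smul_eq_mul,
        Finset.mul_sum, Finset.sum_mul]
      rw [Finset.sum_comm]
      exact Finset.sum_congr rfl fun v _ => Finset.sum_congr rfl fun i _ => by ring
    rw [this]
    exact Finset.sum_nonneg fun v hv => mul_nonneg (hc v hv) (h v (hts hv))

lemma Gordan.dot_cast {n : ℕ} (y w : Fin n → ℤ) :
    (fun i => ((y i : ℤ) : ℝ)) ⬝ᵥ (fun i => ((w i : ℤ) : ℝ)) = ((y ⬝ᵥ w : ℤ) : ℝ) := by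
  simp [dotProduct]

/-- The minimal nonzero elements of a set in `ℕ^κ`. -/
def Gordan.minSet {κ : Type*} [Fintype κ] (C : Set (κ → ℕ)) : Set (κ → ℕ) :=
  {b | b ∈ C ∧ b ≠ 0 ∧ ∀ c ∈ C, c ≠ 0 → c ≤ b → c = b}

/-- Dickson's lemma: the set of minimal nonzero elements is finite. -/
lemma Gordan.minSet_finite {κ : Type*} [Fintype κ] (C : Set (κ → ℕ)) :
    (minSet C).Finite := by
  by_contra hinf
  rw [← Set.not_infinite, not_not] at hinf
  set f := hinf.natEmbedding
  have hpwo : (minSet C).IsPWO :=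
    Set.isPWO_of_wellQuasiOrderedLE _
  obtain ⟨m, k, hmk, hle⟩ := hpwo.exists_lt (f := fun j => (f j : κ → ℕ)) (fun j => (f j).2)
  have h1 := (f k).2.2.2 (f m) (f m).2.1 (f m).2.2.1 hle
  exact absurd (f.injective (Subtype.ext h1)) (Nat.ne_of_lt hmk)

/-- A subtractive submonoid of `ℕ^κ` is generated by its minimal nonzero elements. -/
lemma Gordan.subtractive_gen {κ : Type*} [Fintype κ] (C : Set (κ → ℕ))
    (hsub : ∀ a ∈ C, ∀ b ∈ C, b ≤ a → a - b ∈ C) :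
    ∀ a ∈ C, a ∈ AddSubmonoid.closure (minSet C) := by
  classical
  have sum_eq_of_le : ∀ {c b : κ → ℕ}, c ≤ b → (∑ i, c i) = (∑ i, b i) → c = b := by
    intro c b hle hsum
    by_contra hne
    obtain ⟨i, hi⟩ := Function.ne_iff.mp hne
    have : (∑ i, c i) < ∑ i, b i :=
      Finset.sum_lt_sum (fun j _ => hle j) ⟨i, Finset.mem_univ i, lt_of_le_of_ne (hle i) hi⟩
    omega
  have key : ∀ N a, a ∈ C → (∑ i, a i) ≤ N → a ∈ AddSubmonoid.closure (minSet C) := by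
    intro N
    induction N with
    | zero =>
      intro a ha hN
      have : a = 0 := by
        funext i
        have h1 : a i ≤ ∑ j, a j := Finset.single_le_sum (f := fun j => a j)
          (fun j _ => Nat.zero_le _) (Finset.mem_univ i)
        simp only [Pi.zero_apply]
        omega
      simpa [this] using AddSubmonoid.zero_mem _
    | succ N ih =>
      intro a ha hN
      by_cases ha0 : a = 0
      · simpa [ha0] using AddSubmonoid.zero_mem _
      · have hSne : ((fun b => ∑ i, b i) '' {b | b ∈ C ∧ b ≠ 0 ∧ b ≤ a}).Nonempty :=
          ⟨_, ⟨a, ⟨ha, ha0, le_refl a⟩, rfl⟩⟩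
        obtain ⟨b, hbS, hbsum0⟩ := Nat.sInf_mem hSne
        have hbsum : (∑ i, b i) = sInf ((fun b => ∑ i, b i) '' {b | b ∈ C ∧ b ≠ 0 ∧ b ≤ a}) :=
          hbsum0
        clear hbsum0
        have hmin : ∀ c, c ∈ C → c ≠ 0 → c ≤ a → ∑ i, b i ≤ ∑ i, c i := by
          intro c h1 h2 h3
          exact hbsum.trans_le (Nat.sInf_le ⟨c, ⟨h1, h2, h3⟩, rfl⟩)
        have hbMin : b ∈ minSet C := by
          refine ⟨hbS.1, hbS.2.1, fun c hc hc0 hcb => ?_⟩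
          exact sum_eq_of_le hcb (le_antisymm (Finset.sum_le_sum fun i _ => hcb i)
            (hmin c hc hc0 (le_trans hcb hbS.2.2)))
        have hab : a - b ∈ C := hsub a ha b hbS.1 hbS.2.2
        clear hSne hbsum hmin
        have hsumab : (∑ i, (a - b) i) + (∑ i, b i) = ∑ i, a i := by
          rw [← Finset.sum_add_distrib]
          refine Finset.sum_congr rfl ?_
          intro i _
          have hi : b i ≤ a i := hbS.2.2 i
          simp only [Pi.sub_apply]
          omega
        have hbpos : 0 < ∑ i, b i := by
          rcases Function.ne_iff.mp hbS.2.1 with ⟨i, hi⟩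
          exact Finset.sum_pos' (fun j _ => Nat.zero_le _)
            ⟨i, Finset.mem_univ i, Nat.pos_of_ne_zero (by simpa using hi)⟩
        have hlt : (∑ i, (a - b) i) ≤ N := by omega
        have h1 := ih (a - b) hab hlt
        have h2 : b ∈ AddSubmonoid.closure (minSet C) := AddSubmonoid.subset_closure hbMin
        have heq : (a - b) + b = a := by
          funext i
          have hi : b i ≤ a i := hbS.2.2 i
          simp only [Pi.add_apply, Pi.sub_apply]
          omega
        simpa [heq] using AddSubmonoid.add_mem _ h1 h2
  intro a ha; exact key _ a ha (le_refl _)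

/- ### Gordan's lemma -/

theorem stmt1 {n : ℕ} (S' : Finset (Fin n → ℝ)) (hS' : ∀ x ∈ S', IsLatticePt x) :
    ∃ A : Finset (Fin n → ℝ),
      (↑A ⊆ {x ∈ dualCone (coneGen (S' : Set (Fin n → ℝ))) | IsLatticePt x}) ∧
      ∀ x ∈ {x ∈ dualCone (coneGen (S' : Set (Fin n → ℝ))) | IsLatticePt x},
        ∃ c : (Fin n → ℝ) → ℕ, x = ∑ v ∈ A, (c v : ℝ) • v := by
  classical
  -- integer versions of the generators
  let w : {x // x ∈ S'} → (Fin n → ℤ) := fun j i => (hS' j j.2 i).choose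
  have hw : ∀ (j : {x // x ∈ S'}), (j : Fin n → ℝ) = fun i => ((w j i : ℤ) : ℝ) := by
    intro j; funext i; exact (hS' j j.2 i).choose_spec
  -- index type for variables and slacks
  let κ := (Fin n ⊕ Fin n) ⊕ {x // x ∈ S'}
  let val : (κ → ℕ) → (Fin n → ℤ) := fun e i =>
    (e (Sum.inl (Sum.inl i)) : ℤ) - (e (Sum.inl (Sum.inr i)) : ℤ)
  let C : Set (κ → ℕ) := {e | ∀ j, w j ⬝ᵥ val e = (e (Sum.inr j) : ℤ)}
  -- the real vector associated to an element of ℕ^κ, as an additive hom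
  have val_sub : ∀ a b : κ → ℕ, b ≤ a → val (a - b) = val a - val b := by
    intro a b hle
    funext i
    have h1 : b (Sum.inl (Sum.inl i)) ≤ a (Sum.inl (Sum.inl i)) := hle _
    have h2 : b (Sum.inl (Sum.inr i)) ≤ a (Sum.inl (Sum.inr i)) := hle _
    simp only [val, Pi.sub_apply]
    omega
  have hsub : ∀ a ∈ C, ∀ b ∈ C, b ≤ a → a - b ∈ C := by
    intro a ha b hb hle j
    have h3 : b (Sum.inr j) ≤ a (Sum.inr j) := hle _
    rw [val_sub a b hle, dotProduct_sub, ha j, hb j]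
    simp only [Pi.sub_apply]
    omega
  let f : (κ → ℕ) →+ (Fin n → ℝ) :=
    { toFun := fun e i => ((val e i : ℤ) : ℝ)
      map_zero' := by funext i; simp [val]
      map_add' := by
        intro a b; funext i
        simp only [val, Pi.add_apply]
        push_cast
        ring }
  have hAfin := Gordan.minSet_finite C
  refine ⟨hAfin.toFinset.image f, ?_, ?_⟩
  · -- generators lie in S_σ
    intro v hv
    simp only [Finset.coe_image, Set.mem_image, Finset.mem_coe,
      Set.Finite.mem_toFinset] at hv
    obtain ⟨b, hb, rfl⟩ := hv
    have hbC : b ∈ C := hb.1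
    constructor
    · rw [Gordan.mem_dual_iff]
      intro s hs
      obtain ⟨u, hu, m, hub⟩ : ∃ (u : Fin n → ℤ), s = (fun i => ((u i : ℤ) : ℝ)) ∧
          ∃ m : ℕ, u ⬝ᵥ val b = (m : ℤ) :=
        ⟨w ⟨s, hs⟩, hw ⟨s, hs⟩, b (Sum.inr ⟨s, hs⟩), hbC ⟨s, hs⟩⟩
      rw [hu]
      have h2 : f b ⬝ᵥ (fun i => ((u i : ℤ) : ℝ)) = ((val b ⬝ᵥ u : ℤ) : ℝ) :=
        Gordan.dot_cast (val b) u
      rw [h2, dotProduct_comm (val b) u, hub]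
      positivity
    · intro i; exact ⟨val b i, rfl⟩
  · -- every lattice point of the dual is an ℕ-combination
    intro x hx
    obtain ⟨hxd, hxl⟩ := hx
    let y : Fin n → ℤ := fun i => (hxl i).choose
    have hy : x = fun i => ((y i : ℤ) : ℝ) := by
      funext i; exact (hxl i).choose_spec
    have hds : ∀ j : {x // x ∈ S'}, 0 ≤ w j ⬝ᵥ y := by
      intro j
      have h0 : (0 : ℝ) ≤ x ⬝ᵥ (j : Fin n → ℝ) :=
        (Gordan.mem_dual_iff S' x).mp hxd j j.2
      rw [hy, hw j, Gordan.dot_cast y (w j)] at h0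
      have := Int.cast_nonneg_iff.mp h0
      rwa [dotProduct_comm] at this
    let e : κ → ℕ := Sum.elim
      (Sum.elim (fun i => (y i).toNat) (fun i => (-(y i)).toNat))
      (fun j => (w j ⬝ᵥ y).toNat)
    have hval : val e = y := by
      funext i
      simp only [val, e, Sum.elim_inl, Sum.elim_inr]
      omega
    have heC : e ∈ C := by
      intro j
      rw [hval]
      simp only [e, Sum.elim_inr]
      rw [Int.toNat_of_nonneg (hds j)]
    have hecl : e ∈ AddSubmonoid.closure (Gordan.minSet C) :=
      Gordan.subtractive_gen C hsub e heC
    have hfe : f e = x := by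
      funext i
      show ((val e i : ℤ) : ℝ) = x i
      rw [hval, hy]
    -- membership in the closure of the image
    have hmap : f e ∈ AddSubmonoid.closure
        ((hAfin.toFinset.image f : Finset (Fin n → ℝ)) : Set (Fin n → ℝ)) := by
      have h1 : f e ∈ (AddSubmonoid.closure (Gordan.minSet C)).map f :=
        ⟨e, hecl, rfl⟩
      rw [AddMonoidHom.map_mclosure] at h1
      have h2 : ((hAfin.toFinset.image f : Finset (Fin n → ℝ)) : Set (Fin n → ℝ))
          = f '' Gordan.minSet C := by
        rw [Finset.coe_image, Set.Finite.coe_toFinset]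
      rwa [h2]
    -- the target set is an additive submonoid
    set A := hAfin.toFinset.image f with hA
    let T : AddSubmonoid (Fin n → ℝ) :=
      { carrier := {z | ∃ c : (Fin n → ℝ) → ℕ, z = ∑ v ∈ A, (c v : ℝ) • v}
        zero_mem' := ⟨fun _ => 0, by simp⟩
        add_mem' := by
          rintro z₁ z₂ ⟨c₁, rfl⟩ ⟨c₂, rfl⟩
          refine ⟨c₁ + c₂, ?_⟩
          rw [← Finset.sum_add_distrib]
          refine Finset.sum_congr rfl ?_
          intro v _
          simp only [Pi.add_apply]
          push_cast
          rw [add_smul] }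
    have hsubT : (A : Set (Fin n → ℝ)) ⊆ T := by
      intro v₀ hv₀
      have hvA : v₀ ∈ A := hv₀
      have hsum : ∑ v ∈ A, (((if v = v₀ then 1 else 0 : ℕ) : ℝ)) • v = v₀ := by
        rw [Finset.sum_eq_single v₀]
        · simp
        · intro v hv hne; simp [hne]
        · intro h; exact absurd hvA h
      exact ⟨fun v => if v = v₀ then 1 else 0, hsum.symm⟩
    have := AddSubmonoid.closure_le.mpr hsubT hmap
    obtain ⟨c, hc⟩ := this
    exact ⟨c, by rw [← hfe, hc]⟩
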